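/- Let $A$, $B$ be unital C*-algebras and $\zeta : \mathbb{C}(A) \to \mathbb{C}(B)$ a piecewise $*$-homomorphism (preserving commuting sums and products, scalar multiplication, involution, and unit) which is multiplicative on all pairs of unitaries. Then $\zeta$ is additive on all pairs of self-adjoint elements, i.e. $\zeta(\alpha + \beta) = \zeta(\alpha) + \zeta(\beta)$ for all self-adjoint $\alpha, \beta \in A$. Consequently $\zeta$ extends to a unital $*$-homomorphism $A \to B$. -/

import Mathlib

open NormedSpace Complex Filter Topology


namespace Stmt9Aux
set_option linter.unusedSectionVars false

variable {A B : Type*} [CStarAlgebra A] [CStarAlgebra B]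

lemma smul_normal (c : ℂ) (a : A) (ha : IsStarNormal a) : IsStarNormal (c • a) := by
  constructor
  show star (c • a) * (c • a) = (c • a) * star (c • a)
  rw [star_smul, smul_mul_smul_comm, smul_mul_smul_comm, ha.star_comm_self.eq, mul_comm (star c) c]

section hom

variable (ζ : A → B)
    (hmul : ∀ a b : A, IsStarNormal a → IsStarNormal b → Commute a b →
      ζ (a * b) = ζ a * ζ b)
    (hadd : ∀ a b : A, IsStarNormal a → IsStarNormal b → Commute a b →
      ζ (a + b) = ζ a + ζ b)
    (hsmul : ∀ (c : ℂ) (a : A), IsStarNormal a → ζ (c • a) = c • ζ a)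
    (hstar : ∀ a : A, IsStarNormal a → ζ (star a) = star (ζ a))
    (hone : ζ 1 = 1)

include hmul hadd hsmul hstar hone

lemma zeta_zero : ζ 0 = 0 := by
  have := hsmul 0 0 (by simpa using IsStarNormal.zero)
  simpa using this

/-- The `*`-homomorphism `C(σ(a), ℂ) → B` induced by `ζ` and `cfcHom`. -/
lemma exists_hom {a : A} (ha : IsStarNormal a) :
    ∃ Φ : C(spectrum ℂ a, ℂ) →⋆ₐ[ℂ] B, ∀ f, Φ f = ζ (cfcHom (R := ℂ) ha f) := by
  have hn : ∀ f : C(spectrum ℂ a, ℂ), IsStarNormal (cfcHom (R := ℂ) ha f) := by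
    intro f
    constructor
    show star _ * _ = _ * star _
    rw [← map_star, ← map_mul, ← map_mul, mul_comm]
  have hc : ∀ f g : C(spectrum ℂ a, ℂ),
      Commute (cfcHom (R := ℂ) ha f) (cfcHom (R := ℂ) ha g) := by
    intro f g
    show _ * _ = _ * _
    rw [← map_mul, ← map_mul, mul_comm]
  refine ⟨{ toFun := fun f => ζ (cfcHom (R := ℂ) ha f)
            map_one' := by show ζ (cfcHom (R := ℂ) ha 1) = 1; rw [map_one, hone]
            map_mul' := fun f g => by
              show ζ (cfcHom (R := ℂ) ha (f * g)) = ζ _ * ζ _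
              rw [map_mul, hmul _ _ (hn f) (hn g) (hc f g)]
            map_zero' := by
              show ζ (cfcHom (R := ℂ) ha 0) = 0
              rw [map_zero, zeta_zero ζ hmul hadd hsmul hstar hone]
            map_add' := fun f g => by
              show ζ (cfcHom (R := ℂ) ha (f + g)) = ζ _ + ζ _
              rw [map_add, hadd _ _ (hn f) (hn g) (hc f g)]
            commutes' := fun c => by
              show ζ (cfcHom (R := ℂ) ha (algebraMap ℂ _ c)) = algebraMap ℂ B c
              rw [Algebra.algebraMap_eq_smul_one, map_smul, map_one,
                hsmul _ _ (by simpa using IsStarNormal.one), hone,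
                Algebra.algebraMap_eq_smul_one]
            map_star' := fun f => by
              show ζ (cfcHom (R := ℂ) ha (star f)) = star (ζ _)
              rw [map_star, hstar _ (hn f)] }, fun f => rfl⟩

lemma norm_zeta_le [Nontrivial A] {a : A} (ha : IsStarNormal a) : ‖ζ a‖ ≤ ‖a‖ := by
  obtain ⟨Φ, hΦ⟩ := exists_hom ζ hmul hadd hsmul hstar hone ha
  have h1 : ζ a = Φ ((ContinuousMap.id ℂ).restrict (spectrum ℂ a)) := by
    rw [hΦ, cfcHom_id]
  rw [h1]
  refine (NonUnitalStarAlgHom.norm_apply_le Φ _).trans ?_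
  rw [ContinuousMap.norm_le _ (norm_nonneg a)]
  exact fun x => spectrum.norm_le_norm_of_mem x.2

lemma zeta_exp {a : A} (ha : IsStarNormal a) (c : ℂ) :
    ζ (NormedSpace.exp (c • a)) = NormedSpace.exp (c • ζ a) := by
  obtain ⟨Φ, hΦ⟩ := exists_hom ζ hmul hadd hsmul hstar hone ha
  have hΦc : Continuous Φ :=
    AddMonoidHomClass.continuous_of_bound Φ 1
      (fun f => by simpa using NonUnitalStarAlgHom.norm_apply_le Φ f)
  set ι : C(spectrum ℂ a, ℂ) := (ContinuousMap.id ℂ).restrict (spectrum ℂ a) with hι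
  letI : NormedAlgebra ℚ A := .restrictScalars ℚ ℂ A
  letI : NormedAlgebra ℚ B := .restrictScalars ℚ ℂ B
  have h1 : NormedSpace.exp (c • a) = cfcHom (R := ℂ) ha (NormedSpace.exp (c • ι)) := by
    rw [map_exp _ (cfcHom_isClosedEmbedding (R := ℂ) ha).continuous, map_smul, cfcHom_id]
  rw [h1, ← hΦ, map_exp _ hΦc, map_smul, hΦ, cfcHom_id]

end hom

/-- bound on `exp (I • k) - 1` for selfadjoint `k`. -/
lemma norm_exp_smul_I_sub_one_le [Nontrivial B] {k : B} (hk : IsSelfAdjoint k) (h1 : ‖k‖ ≤ 1) :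
    ‖NormedSpace.exp (I • k) - 1‖ ≤ 2 * ‖k‖ := by
  have hk' : IsStarNormal k := hk.isStarNormal
  set ι : C(spectrum ℂ k, ℂ) := (ContinuousMap.id ℂ).restrict (spectrum ℂ k) with hι
  letI : NormedAlgebra ℚ B := .restrictScalars ℚ ℂ B
  have h2 : NormedSpace.exp (I • k) = cfcHom (R := ℂ) hk' (NormedSpace.exp (I • ι)) := by
    rw [map_exp _ (cfcHom_isClosedEmbedding (R := ℂ) hk').continuous, map_smul, cfcHom_id]
  have h3 : NormedSpace.exp (I • k) - 1 = cfcHom (R := ℂ) hk' (NormedSpace.exp (I • ι) - 1) := by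
    rw [map_sub, map_one, h2]
  rw [h3]
  refine (NonUnitalStarAlgHom.norm_apply_le _ _).trans ?_
  rw [ContinuousMap.norm_le _ (by positivity)]
  intro x
  have hx : ‖(x : ℂ)‖ ≤ ‖k‖ := spectrum.norm_le_norm_of_mem x.2
  have : (NormedSpace.exp (I • ι) - 1) x = Complex.exp (I * x) - 1 := by
    simp [exp_continuousMap_eq, hι, Complex.exp_eq_exp_ℂ]
  rw [this]
  calc ‖Complex.exp (I * x) - 1‖ ≤ 2 * ‖I * x‖ := by
        refine Complex.norm_exp_sub_one_le ?_
        rw [norm_mul, Complex.norm_I, one_mul]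
        exact le_trans hx h1
    _ ≤ 2 * ‖k‖ := by
        rw [norm_mul, Complex.norm_I, one_mul]
        linarith

end Stmt9Aux


namespace Stmt9Aux2
set_option linter.unusedSectionVars false

variable {A : Type*} [CStarAlgebra A]

lemma unitary_log [Nontrivial A] {w : A} (hw : w ∈ unitary A) (hsmall : ‖w - 1‖ ≤ 1 / 2) :
    ∃ h : A, IsSelfAdjoint h ∧ w = NormedSpace.exp (I • h) ∧ ‖h‖ ≤ 3 / 2 * ‖w - 1‖ := by
  have hwn : IsStarNormal w := isStarNormal_of_mem_unitary hw
  -- spectrum facts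
  have habs : ∀ z ∈ spectrum ℂ w, ‖z‖ = 1 := by
    intro z hz
    have := Unitary.spectrum_subset_circle (𝕜 := ℂ) ⟨w, hw⟩ hz
    simpa using Metric.mem_sphere.mp this
  have hdist : ∀ z ∈ spectrum ℂ w, ‖z - 1‖ ≤ ‖w - 1‖ := by
    intro z hz
    have hz1 : z - 1 ∈ spectrum ℂ (w - algebraMap ℂ A 1) := by
      rw [← spectrum.sub_singleton_eq]
      exact Set.sub_mem_sub hz rfl
    have : z - 1 ∈ spectrum ℂ (w - 1) := by simpa using hz1
    exact spectrum.norm_le_norm_of_mem this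
  have hslit : ∀ z ∈ spectrum ℂ w, z ∈ slitPlane := by
    intro z hz
    left
    have h1 : |(z - 1).re| ≤ ‖z - 1‖ := by
      exact Complex.abs_re_le_norm _
    have h2 : ‖z - 1‖ ≤ 1 / 2 := (hdist z hz).trans hsmall
    have : (z - 1).re = z.re - 1 := by simp
    rw [this] at h1
    cases' abs_le.mp h1 with h3 _
    linarith
  -- the continuous log on the spectrum
  have hlogc : Continuous fun z : spectrum ℂ w => Complex.log z := by
    rw [continuous_iff_continuousAt]
    intro z
    exact (continuousAt_clog (hslit z z.2)).comp continuous_subtype_val.continuousAt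
  set l : C(spectrum ℂ w, ℂ) := ⟨fun z => Complex.log z, hlogc⟩ with hl
  set h : A := cfcHom (R := ℂ) hwn ((-I) • l) with hh
  have hpure : ∀ z ∈ spectrum ℂ w, (starRingEnd ℂ) (Complex.log z) = - Complex.log z := by
    intro z hz
    have hre : (Complex.log z).re = 0 := by
      rw [Complex.log_re, habs z hz, Real.log_one]
    apply Complex.ext
    · simp [hre]
    · simp
  refine ⟨h, ?_, ?_, ?_⟩
  · -- selfadjoint
    rw [IsSelfAdjoint, hh, ← map_star]
    congr 1
    ext z
    show (starRingEnd ℂ) (-I * Complex.log z) = -I * Complex.log z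
    rw [map_mul, hpure z z.2]
    simp
  · -- w = exp(I h)
    have h1 : I • h = cfcHom (R := ℂ) hwn l := by
      rw [hh, ← map_smul, smul_smul]
      norm_num
    letI : NormedAlgebra ℚ A := .restrictScalars ℚ ℂ A
    have h2 : NormedSpace.exp (I • h) = cfcHom (R := ℂ) hwn (NormedSpace.exp l) := by
      rw [h1, ← map_exp _ (cfcHom_isClosedEmbedding (R := ℂ) hwn).continuous]
    rw [h2]
    have h3 : NormedSpace.exp l = (ContinuousMap.id ℂ).restrict (spectrum ℂ w) := by
      ext z
      have hz0 : (z : ℂ) ≠ 0 := by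
        intro h0
        have := habs z z.2
        rw [h0] at this
        simp at this
      rw [exp_continuousMap_eq]
      show NormedSpace.exp (Complex.log z) = (z : ℂ)
      rw [← Complex.exp_eq_exp_ℂ]
      exact Complex.exp_log hz0
    rw [h3, cfcHom_id]
  · -- norm bound
    rw [hh]
    refine (NonUnitalStarAlgHom.norm_apply_le _ _).trans ?_
    rw [ContinuousMap.norm_le _ (by positivity)]
    intro z
    have hval : ‖((-I) • l) z‖ = ‖Complex.log z‖ := by
      show ‖-I * Complex.log z‖ = _
      rw [norm_mul]
      simp
    rw [hval]
    have h4 : ‖(z : ℂ) - 1‖ ≤ 1 / 2 := (hdist z z.2).trans hsmall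
    have h5 : ‖Complex.log (1 + ((z : ℂ) - 1))‖ ≤ 3 / 2 * ‖(z : ℂ) - 1‖ :=
      Complex.norm_log_one_add_half_le_self h4
    have h6 : (1 : ℂ) + ((z : ℂ) - 1) = z := by ring
    rw [h6] at h5
    exact h5.trans (by nlinarith [hdist z z.2, norm_nonneg ((z:ℂ) - 1)])

end Stmt9Aux2


namespace Stmt9Aux3
set_option linter.unusedSectionVars false

variable {A : Type*} [CStarAlgebra A]

lemma commute_re_im {a : A} (ha : IsStarNormal a) :
    Commute ((realPart a : A)) ((imaginaryPart a : A)) := by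
  have hc : a * star a = star a * a := ha.star_comm_self.symm.eq
  have hpq : (a + star a) * (a - star a) = (a - star a) * (a + star a) := by
    simp only [mul_add, add_mul, mul_sub, sub_mul]
    rw [hc]
    abel
  rw [Commute, SemiconjBy, realPart_apply_coe, imaginaryPart_apply_coe]
  simp only [smul_mul_assoc, mul_smul_comm]
  rw [hpq]
  module

lemma sa_mem_span_unitary [Nontrivial A] {x : A} (hx : IsSelfAdjoint x) (hx1 : ‖x‖ ≤ 1) :
    x ∈ Submodule.span ℂ (unitary A : Set A) := by
  have hxn : IsStarNormal x := hx.isStarNormal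
  set f : ℂ → ℂ := fun z => (z.re : ℂ) + (Real.sqrt (1 - z.re ^ 2) : ℂ) * I with hf
  have hfc : Continuous f := by
    apply Continuous.add
    · exact Complex.continuous_ofReal.comp Complex.continuous_re
    · exact (Complex.continuous_ofReal.comp ((Real.continuous_sqrt.comp
        (continuous_const.sub ((Complex.continuous_re).pow 2))))).mul continuous_const
  have hre : ∀ z ∈ spectrum ℂ x, z = (z.re : ℂ) ∧ z.re ^ 2 ≤ 1 := by
    intro z hz
    refine ⟨hx.mem_spectrum_eq_re hz, ?_⟩
    have h1 : ‖z‖ ≤ ‖x‖ := spectrum.norm_le_norm_of_mem hz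
    have h2 : |z.re| ≤ ‖z‖ := by exact Complex.abs_re_le_norm z
    nlinarith [abs_nonneg z.re, _root_.sq_abs z.re]
  have key : ∀ z ∈ spectrum ℂ x, star (f z) * f z = 1 ∧
      f z + star (f z) = 2 * z := by
    intro z hz
    obtain ⟨hz1, hz2⟩ := hre z hz
    have hs : (Real.sqrt (1 - z.re ^ 2)) ^ 2 = 1 - z.re ^ 2 :=
      Real.sq_sqrt (by linarith)
    constructor
    · have : star (f z) = (z.re : ℂ) - (Real.sqrt (1 - z.re ^ 2) : ℂ) * I := by
        simp [hf, Complex.star_def, Complex.conj_ofReal, sub_eq_add_neg]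
      rw [this, hf]
      have expand : ((z.re : ℂ) - (Real.sqrt (1 - z.re ^ 2) : ℂ) * I) *
          ((z.re : ℂ) + (Real.sqrt (1 - z.re ^ 2) : ℂ) * I)
          = (z.re : ℂ) ^ 2 + ((Real.sqrt (1 - z.re ^ 2) : ℂ)) ^ 2 := by
        linear_combination (-((Real.sqrt (1 - z.re ^ 2) : ℂ)) ^ 2) * Complex.I_sq
      rw [expand, ← Complex.ofReal_pow, ← Complex.ofReal_pow, hs]
      push_cast
      ring
    · have : star (f z) = (z.re : ℂ) - (Real.sqrt (1 - z.re ^ 2) : ℂ) * I := by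
        simp [hf, Complex.star_def, Complex.conj_ofReal, sub_eq_add_neg]
      rw [this, hf]
      show (z.re : ℂ) + _ * I + _ = 2 * z
      linear_combination (-2 : ℂ) * hz1
  set u : A := cfc f x with hu
  have hcf : ContinuousOn f (spectrum ℂ x) := hfc.continuousOn
  have hcfs : ContinuousOn (fun z => star (f z)) (spectrum ℂ x) :=
    (continuous_star.comp hfc).continuousOn
  have hustar : star u = cfc (fun z => star (f z)) x := by
    rw [hu, ← cfc_star]
  have humem : u ∈ unitary A := by
    rw [Unitary.mem_iff]
    constructor
    · rw [hustar, hu, ← cfc_mul _ _ x hcfs hcf]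
      rw [cfc_congr (fun z hz => (key z hz).1)]
      exact cfc_one ℂ x
    · rw [hustar, hu, ← cfc_mul _ _ x hcf hcfs]
      have : ∀ z ∈ spectrum ℂ x, f z * star (f z) = 1 := by
        intro z hz
        rw [mul_comm]
        exact (key z hz).1
      rw [cfc_congr this]
      exact cfc_one ℂ x
  have hsum : u + star u = (2 : ℂ) • x := by
    rw [hustar, hu, ← cfc_add x _ _ hcf hcfs]
    rw [cfc_congr (fun z hz => (key z hz).2)]
    exact cfc_const_mul_id (2 : ℂ) x
  have hx2 : x = (2 : ℂ)⁻¹ • (u + star u) := by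
    rw [hsum, smul_smul]
    norm_num
  rw [hx2]
  exact Submodule.smul_mem _ _ (Submodule.add_mem _
    (Submodule.subset_span humem) (Submodule.subset_span (Unitary.star_mem humem)))

lemma mem_span_unitary [Nontrivial A] (x : A) : x ∈ Submodule.span ℂ (unitary A : Set A) := by
  have hsa : ∀ y : A, IsSelfAdjoint y → y ∈ Submodule.span ℂ (unitary A : Set A) := by
    intro y hy
    rcases eq_or_ne y 0 with rfl | hy0
    · exact Submodule.zero_mem _
    · have hpos : (0 : ℝ) < ‖y‖ := norm_pos_iff.mpr hy0
      set z : A := ((‖y‖ : ℂ))⁻¹ • y with hz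
      have hzsa : IsSelfAdjoint z := by
        rw [IsSelfAdjoint, hz, star_smul, hy.star_eq]
        congr 1
        rw [star_inv₀]
        congr 1
        exact Complex.conj_ofReal _
      have hzn : ‖z‖ ≤ 1 := by
        rw [hz, norm_smul]
        have : ‖((‖y‖ : ℂ))⁻¹‖ = ‖y‖⁻¹ := by
          rw [norm_inv, Complex.norm_real, Real.norm_of_nonneg (norm_nonneg y)]
        rw [this, inv_mul_cancel₀ (ne_of_gt hpos)]
      have := sa_mem_span_unitary hzsa hzn
      have hy2 : y = ((‖y‖ : ℂ)) • z := by
        rw [hz, smul_smul, mul_inv_cancel₀, one_smul]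
        simpa using ne_of_gt hpos
      rw [hy2]
      exact Submodule.smul_mem _ _ this
  have hdecomp := realPart_add_I_smul_imaginaryPart x
  rw [← hdecomp]
  exact Submodule.add_mem _ (hsa _ (realPart x).2)
    (Submodule.smul_mem _ _ (hsa _ (imaginaryPart x).2))

end Stmt9Aux3
namespace Stmt9Aux

lemma exp_real_smul {C : Type*} [CStarAlgebra C] (γ : C) (t : ℝ) :
    NormedSpace.exp (t • (I • γ)) = NormedSpace.exp (((t : ℂ) * I) • γ) := by
  congr 1
  rw [← algebraMap_smul ℂ t (I • γ), Complex.coe_algebraMap, smul_smul]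

lemma hasDerivAt_exp_zero {C : Type*} [CStarAlgebra C] (x : C) :
    HasDerivAt (fun t : ℝ => NormedSpace.exp (t • x)) x 0 := by
  simpa using hasDerivAt_exp_smul_const (𝕂 := ℝ) x (0 : ℝ)

end Stmt9Aux

set_option maxHeartbeats 1000000 in
/-- A piecewise `*`-homomorphism `ζ : ℂ(A) → ℂ(B)` between the normal parts of
unital C*-algebras (preserving commuting sums and products, scalar multiplication,
involution and unit) which is multiplicative on all pairs of unitaries is additive on all
pairs of self-adjoint elements, and consequently extends to a unital `*`-homomorphism
`A → B`. -/
theorem stmt9 (A B : Type*)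
    [NormedRing A] [StarRing A] [CStarRing A] [NormedAlgebra ℂ A] [StarModule ℂ A]
    [CompleteSpace A]
    [NormedRing B] [StarRing B] [CStarRing B] [NormedAlgebra ℂ B] [StarModule ℂ B]
    [CompleteSpace B]
    (ζ : A → B)
    (hnormal : ∀ a : A, IsStarNormal a → IsStarNormal (ζ a))
    (hmul : ∀ a b : A, IsStarNormal a → IsStarNormal b → Commute a b →
      ζ (a * b) = ζ a * ζ b)
    (hadd : ∀ a b : A, IsStarNormal a → IsStarNormal b → Commute a b →
      ζ (a + b) = ζ a + ζ b)
    (hsmul : ∀ (c : ℂ) (a : A), IsStarNormal a → ζ (c • a) = c • ζ a)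
    (hstar : ∀ a : A, IsStarNormal a → ζ (star a) = star (ζ a))
    (hone : ζ 1 = 1)
    (huni : ∀ u v : A, u ∈ unitary A → v ∈ unitary A → ζ (u * v) = ζ u * ζ v) :
    (∀ a b : A, IsSelfAdjoint a → IsSelfAdjoint b → ζ (a + b) = ζ a + ζ b) ∧
    ∃ φ : A →⋆ₐ[ℂ] B, ∀ a : A, IsStarNormal a → φ a = ζ a := by
  rcases subsingleton_or_nontrivial B with hB | hB
  · refine ⟨fun a b _ _ => Subsingleton.elim _ _,
      ⟨{ toFun := fun _ => 1
         map_one' := Subsingleton.elim _ _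
         map_mul' := fun _ _ => Subsingleton.elim _ _
         map_zero' := Subsingleton.elim _ _
         map_add' := fun _ _ => Subsingleton.elim _ _
         commutes' := fun _ => Subsingleton.elim _ _
         map_star' := fun _ => Subsingleton.elim _ _ }, fun a _ => Subsingleton.elim _ _⟩⟩
  letI instA : CStarAlgebra A := { }
  letI instB : CStarAlgebra B := { }
  have hzero : ζ 0 = 0 := Stmt9Aux.zeta_zero ζ hmul hadd hsmul hstar hone
  haveI : Nontrivial A := by
    by_contra hA
    rw [not_nontrivial_iff_subsingleton] at hA
    have h10 : (1 : A) = 0 := Subsingleton.elim _ _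
    exact one_ne_zero (α := B) (by rw [← hone, h10, hzero])
  have hζexp : ∀ (γ : A), IsStarNormal γ → ∀ c : ℂ, ζ (NormedSpace.exp (c • γ)) = NormedSpace.exp (c • ζ γ) :=
    fun γ hγ c => Stmt9Aux.zeta_exp ζ hmul hadd hsmul hstar hone hγ c
  have hζnorm : ∀ (γ : A), IsStarNormal γ → ‖ζ γ‖ ≤ ‖γ‖ :=
    fun γ hγ => Stmt9Aux.norm_zeta_le ζ hmul hadd hsmul hstar hone hγ
  have hneg : ∀ γ : A, IsStarNormal γ → ζ (-γ) = - ζ γ := by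
    intro γ hγ
    have := hsmul (-1) γ hγ
    simpa using this
  have hexp_mem : ∀ (γ : A) (t : ℝ), IsSelfAdjoint γ → NormedSpace.exp (((t : ℂ) * I) • γ) ∈ unitary A := by
    intro γ t hγ
    letI : NormedAlgebra ℚ A := .restrictScalars ℚ ℂ A
    refine exp_mem_unitary_of_mem_skewAdjoint ?_
    rw [skewAdjoint.mem_iff, star_smul, hγ.star_eq, ← neg_smul]
    congr 1
    simp only [Complex.star_def, map_mul, Complex.conj_ofReal, Complex.conj_I]
    ring
  -- main additivity on selfadjoint elements
  have main_add : ∀ a b : A, IsSelfAdjoint a → IsSelfAdjoint b → ζ (a + b) = ζ a + ζ b := by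
    intro α β hα hβ
    have hαβ : IsSelfAdjoint (α + β) := hα.add hβ
    set x₁ : A := I • (α + β) with hx₁
    set x₂ : A := I • (-α) with hx₂
    set x₃ : A := I • (-β) with hx₃
    set u : ℝ → A := fun t => NormedSpace.exp (t • x₁) * NormedSpace.exp (t • x₂) * NormedSpace.exp (t • x₃) with hu
    set X : B := ζ (α + β) with hX
    set Y : B := ζ α with hY
    set Z : B := ζ β with hZ
    set y₁ : B := I • X with hy₁
    set y₂ : B := I • (-Y) with hy₂
    set y₃ : B := I • (-Z) with hy₃
    set g : ℝ → B := fun t =>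
      NormedSpace.exp (t • y₁) * NormedSpace.exp (t • y₂) * NormedSpace.exp (t • y₃) with hg
    have m1 : ∀ t : ℝ, NormedSpace.exp (t • x₁) ∈ unitary A := fun t => by
      rw [hx₁, Stmt9Aux.exp_real_smul]; exact hexp_mem _ t hαβ
    have m2 : ∀ t : ℝ, NormedSpace.exp (t • x₂) ∈ unitary A := fun t => by
      rw [hx₂, Stmt9Aux.exp_real_smul]; exact hexp_mem _ t hα.neg
    have m3 : ∀ t : ℝ, NormedSpace.exp (t • x₃) ∈ unitary A := fun t => by
      rw [hx₃, Stmt9Aux.exp_real_smul]; exact hexp_mem _ t hβ.neg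
    have humem : ∀ t : ℝ, u t ∈ unitary A := fun t =>
      mul_mem (mul_mem (m1 t) (m2 t)) (m3 t)
    have hguζ : ∀ t : ℝ, g t = ζ (u t) := by
      intro t
      have hz1 : ζ (NormedSpace.exp (t • x₁)) = NormedSpace.exp (t • y₁) := by
        rw [hx₁, hy₁, Stmt9Aux.exp_real_smul, hζexp _ hαβ.isStarNormal, hX,
          Stmt9Aux.exp_real_smul]
      have hz2 : ζ (NormedSpace.exp (t • x₂)) = NormedSpace.exp (t • y₂) := by
        rw [hx₂, hy₂, Stmt9Aux.exp_real_smul, hζexp _ hα.neg.isStarNormal,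
          hneg _ hα.isStarNormal, hY, Stmt9Aux.exp_real_smul]
      have hz3 : ζ (NormedSpace.exp (t • x₃)) = NormedSpace.exp (t • y₃) := by
        rw [hx₃, hy₃, Stmt9Aux.exp_real_smul, hζexp _ hβ.neg.isStarNormal,
          hneg _ hβ.isStarNormal, hZ, Stmt9Aux.exp_real_smul]
      rw [hg]
      show NormedSpace.exp (t • y₁) * NormedSpace.exp (t • y₂) * NormedSpace.exp (t • y₃) = ζ (u t)
      rw [hu]
      show _ = ζ (NormedSpace.exp (t • x₁) * NormedSpace.exp (t • x₂) * NormedSpace.exp (t • x₃))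
      rw [huni _ _ (mul_mem (m1 t) (m2 t)) (m3 t), huni _ _ (m1 t) (m2 t), hz1, hz2, hz3]
    have hu' : HasDerivAt u (x₁ + x₂ + x₃) 0 := by
      have h := ((Stmt9Aux.hasDerivAt_exp_zero x₁).mul
        (Stmt9Aux.hasDerivAt_exp_zero x₂)).mul (Stmt9Aux.hasDerivAt_exp_zero x₃)
      simp [zero_smul, NormedSpace.exp_zero] at h
      exact h
    have hx123 : x₁ + x₂ + x₃ = 0 := by
      rw [hx₁, hx₂, hx₃]
      simp only [smul_add, smul_neg]
      abel
    have hu0 : HasDerivAt u 0 0 := hx123 ▸ hu'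
    have hg' : HasDerivAt g (y₁ + y₂ + y₃) 0 := by
      have h := ((Stmt9Aux.hasDerivAt_exp_zero y₁).mul
        (Stmt9Aux.hasDerivAt_exp_zero y₂)).mul (Stmt9Aux.hasDerivAt_exp_zero y₃)
      simp [zero_smul, NormedSpace.exp_zero] at h
      exact h
    have hu00 : u 0 = 1 := by
      rw [hu]
      show NormedSpace.exp ((0:ℝ) • x₁) * NormedSpace.exp ((0:ℝ) • x₂) * NormedSpace.exp ((0:ℝ) • x₃) = 1
      simp [zero_smul, NormedSpace.exp_zero]
    have hg00 : g 0 = 1 := by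
      rw [hg]
      show NormedSpace.exp ((0:ℝ) • y₁) * NormedSpace.exp ((0:ℝ) • y₂) * NormedSpace.exp ((0:ℝ) • y₃) = 1
      simp [zero_smul, NormedSpace.exp_zero]
    have hsmall : ∀ᶠ t : ℝ in 𝓝[≠] (0:ℝ), ‖u t - 1‖ ≤ 1/2 := by
      have hcont : ContinuousAt u 0 := hu0.continuousAt
      have h2 : ∀ᶠ y in 𝓝 (1 : A), ‖y - 1‖ ≤ 1/2 := by
        filter_upwards [Metric.closedBall_mem_nhds (1 : A) (by norm_num : (0:ℝ) < 1/2)] with y hy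
        rw [Metric.mem_closedBall, dist_eq_norm] at hy
        exact hy
      have h5 : Tendsto u (𝓝 0) (𝓝 (1 : A)) := hu00 ▸ hcont.tendsto
      exact (h5.eventually h2).filter_mono nhdsWithin_le_nhds
    have hbound : ∀ᶠ t in 𝓝[≠] (0:ℝ), ‖g t - 1‖ ≤ 3 * ‖u t - 1‖ := by
      filter_upwards [hsmall] with t ht
      obtain ⟨h, hhsa, hhexp, hhnorm⟩ := Stmt9Aux2.unitary_log (humem t) ht
      have hζh_sa : IsSelfAdjoint (ζ h) := by
        rw [IsSelfAdjoint, ← hstar _ hhsa.isStarNormal, hhsa.star_eq]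
      have hζh_norm : ‖ζ h‖ ≤ ‖h‖ := hζnorm _ hhsa.isStarNormal
      have h1 : ‖h‖ ≤ 3/4 := hhnorm.trans (by linarith)
      have hgu : g t = NormedSpace.exp (I • ζ h) := by
        rw [hguζ t, hhexp, hζexp _ hhsa.isStarNormal I]
      rw [hgu]
      calc ‖NormedSpace.exp (I • ζ h) - 1‖ ≤ 2 * ‖ζ h‖ :=
            Stmt9Aux.norm_exp_smul_I_sub_one_le hζh_sa (by linarith)
        _ ≤ 3 * ‖u t - 1‖ := by
            have := hζh_norm.trans hhnorm
            linarith
    have hslope_u : Tendsto (slope u 0) (𝓝[≠] (0:ℝ)) (𝓝 0) :=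
      hasDerivAt_iff_tendsto_slope.mp hu0
    have hslope_g : Tendsto (slope g 0) (𝓝[≠] (0:ℝ)) (𝓝 0) := by
      apply squeeze_zero_norm' (a := fun t => 3 * ‖slope u 0 t‖)
      · filter_upwards [hbound] with t ht
        rw [slope_def_module, slope_def_module, hu00, hg00, norm_smul, norm_smul]
        have h6 : (0:ℝ) ≤ ‖(t - 0)⁻¹‖ := norm_nonneg _
        nlinarith [mul_le_mul_of_nonneg_left ht h6]
      · have h7 := hslope_u.norm.const_mul (3:ℝ)
        simpa using h7
    have hg0' : HasDerivAt g 0 0 := hasDerivAt_iff_tendsto_slope.mpr hslope_g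
    have huniq : y₁ + y₂ + y₃ = 0 := hg'.unique hg0'
    have h8 : I • (X - (Y + Z)) = 0 := by
      rw [smul_sub, smul_add, ← huniq, hy₁, hy₂, hy₃]
      simp only [smul_neg]
      abel
    have h9 : X - (Y + Z) = 0 := by
      rcases smul_eq_zero.mp h8 with h | h
      · exact absurd h I_ne_zero
      · exact h
    exact sub_eq_zero.mp h9
  refine ⟨main_add, ?_⟩
  -- the extension to a star algebra homomorphism
  have hre_n : ∀ x : A, IsStarNormal ((realPart x : A)) := fun x => (realPart x).2.isStarNormal
  have him_n : ∀ x : A, IsStarNormal ((imaginaryPart x : A)) := fun x =>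
    (imaginaryPart x).2.isStarNormal
  obtain ⟨φf, hφf⟩ : ∃ f : A → B, f = fun x => ζ (realPart x : A) + I • ζ (imaginaryPart x : A) :=
    ⟨_, rfl⟩
  have hζ_rsmul : ∀ (r : ℝ) (x : A), IsStarNormal x → ζ (r • x) = r • ζ x := by
    intro r x hx
    rw [← algebraMap_smul ℂ r x, Complex.coe_algebraMap, hsmul _ _ hx,
      ← Complex.coe_algebraMap, algebraMap_smul]
  have hφ_normal : ∀ a : A, IsStarNormal a → φf a = ζ a := by
    intro a ha
    have hcomm : Commute ((realPart a : A)) (I • (imaginaryPart a : A)) :=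
      (Stmt9Aux3.commute_re_im ha).smul_right I
    have h1 : ζ a = ζ ((realPart a : A) + I • (imaginaryPart a : A)) := by
      rw [realPart_add_I_smul_imaginaryPart]
    rw [hφf]
    show ζ (realPart a : A) + I • ζ (imaginaryPart a : A) = ζ a
    rw [h1, hadd _ _ (hre_n a) (Stmt9Aux.smul_normal I _ (him_n a)) hcomm,
      hsmul I _ (him_n a)]
  have hφ_zero : φf 0 = 0 := by
    rw [hφf]
    simp only [map_zero, ZeroMemClass.coe_zero, hzero, smul_zero, add_zero]
  have hφ_add : ∀ x y : A, φf (x + y) = φf x + φf y := by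
    intro x y
    rw [hφf]
    dsimp only
    rw [map_add, map_add, AddSubgroup.coe_add, AddSubgroup.coe_add,
      main_add _ _ (realPart x).2 (realPart y).2,
      main_add _ _ (imaginaryPart x).2 (imaginaryPart y).2, smul_add]
    abel
  have hφ_smul : ∀ (c : ℂ) (x : A), φf (c • x) = c • φf x := by
    intro c x
    obtain ⟨r, s⟩ := c
    rw [hφf]
    dsimp only
    rw [realPart_smul, imaginaryPart_smul]
    dsimp only
    rw [AddSubgroup.coe_sub, AddSubgroup.coe_add,
      selfAdjoint.val_smul, selfAdjoint.val_smul, selfAdjoint.val_smul, selfAdjoint.val_smul,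
      sub_eq_add_neg, ← neg_smul,
      main_add _ _ ((IsSelfAdjoint.all r).smul (realPart x).2)
        ((IsSelfAdjoint.all (-s)).smul (imaginaryPart x).2),
      main_add _ _ ((IsSelfAdjoint.all r).smul (imaginaryPart x).2)
        ((IsSelfAdjoint.all s).smul (realPart x).2),
      hζ_rsmul r _ (hre_n x), hζ_rsmul (-s) _ (him_n x),
      hζ_rsmul r _ (him_n x), hζ_rsmul s _ (hre_n x),
      Complex.mk_eq_add_mul_I]
    have hcoe : ∀ (a : ℝ) (b : B), a • b = ((a : ℂ)) • b := fun a b => by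
      rw [← algebraMap_smul ℂ a b, Complex.coe_algebraMap]
    rw [hcoe r (ζ (realPart x : A)), hcoe (-s) (ζ (imaginaryPart x : A)),
      hcoe r (ζ (imaginaryPart x : A)), hcoe s (ζ (realPart x : A))]
    match_scalars <;> first
      | ring1
      | linear_combination (-(s : ℂ)) * Complex.I_sq
      | linear_combination ((s : ℂ)) * Complex.I_sq
  have hφ_one : φf 1 = 1 := by
    rw [hφ_normal 1 (by simpa using IsStarNormal.one), hone]
  have hφ_star : ∀ x : A, φf (star x) = star (φf x) := by
    intro x
    have h1 : realPart (star x) = realPart x := by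
      apply Subtype.ext
      rw [realPart_apply_coe, realPart_apply_coe, star_star, add_comm]
    have h2 : imaginaryPart (star x) = - imaginaryPart x := by
      apply Subtype.ext
      rw [AddSubgroup.coe_neg, imaginaryPart_apply_coe, imaginaryPart_apply_coe, star_star,
        ← smul_neg, ← smul_neg, neg_sub]
    rw [hφf]
    dsimp only
    rw [h1, h2, AddSubgroup.coe_neg, hneg _ (him_n x), star_add, star_smul,
      Complex.star_def, Complex.conj_I]
    have hsa1 : star (ζ (realPart x : A)) = ζ (realPart x : A) := by
      rw [← hstar _ (hre_n x), (realPart x).2.star_eq]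
    have hsa2 : star (ζ (imaginaryPart x : A)) = ζ (imaginaryPart x : A) := by
      rw [← hstar _ (him_n x), (imaginaryPart x).2.star_eq]
    rw [hsa1, hsa2, smul_neg, neg_smul]
  have hφ_mul : ∀ x y : A, φf (x * y) = φf x * φf y := by
    intro x y
    refine Submodule.span_induction₂
      (p := fun a b _ _ => φf (a * b) = φf a * φf b) ?_ ?_ ?_ ?_ ?_ ?_ ?_
      (Stmt9Aux3.mem_span_unitary x) (Stmt9Aux3.mem_span_unitary y)
    · intro a b ha hb
      rw [hφ_normal _ (isStarNormal_of_mem_unitary (mul_mem ha hb)), huni _ _ ha hb,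
        hφ_normal _ (isStarNormal_of_mem_unitary ha),
        hφ_normal _ (isStarNormal_of_mem_unitary hb)]
    · intro b _
      rw [zero_mul, hφ_zero, zero_mul]
    · intro a _
      rw [mul_zero, hφ_zero, mul_zero]
    · intro a b z _ _ _ h1 h2
      rw [add_mul, hφ_add (a * z) (b * z), h1, h2, hφ_add a b, add_mul]
    · intro a b z _ _ _ h1 h2
      rw [mul_add, hφ_add (a * b) (a * z), h1, h2, hφ_add b z, mul_add]
    · intro r a b _ _ h1
      rw [smul_mul_assoc, hφ_smul r (a * b), h1, hφ_smul r a, smul_mul_assoc]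
    · intro r a b _ _ h1
      rw [mul_smul_comm, hφ_smul r (a * b), h1, hφ_smul r b, mul_smul_comm]
  exact ⟨{ toFun := φf
           map_one' := hφ_one
           map_mul' := hφ_mul
           map_zero' := hφ_zero
           map_add' := hφ_add
           commutes' := fun c => by
             show φf (algebraMap ℂ A c) = algebraMap ℂ B c
             rw [Algebra.algebraMap_eq_smul_one, hφ_smul, hφ_one,
               Algebra.algebraMap_eq_smul_one]
           map_star' := hφ_star }, fun a ha => hφ_normal a ha⟩
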